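/- If a topological vector space N with central Hilbert space H forms a Gel'fand triple (with increasing compatible Hilbertian norms ‖·‖_p such that each inclusion N_{p+1} ↪ N_p is Hilbert–Schmidt), then s(N) := ⋂_{p≥0} ℓ²_p(N_p), where ℓ²_p(K) = {f : ℕ → K : ∑_k k^{2p}‖f_k‖²_K < ∞}, equipped with the norms of ℓ²_p(N_p), forms a Gel'fand triple s(N) ⊂ ℓ²(H) ⊂ s'(N); in particular each inclusion ℓ²_{p+1}(N_{p+1}) ↪ ℓ²_p(N_p) is Hilbert–Schmidt with Hilbert–Schmidt norm squared equal to ‖N_{p+1,p}‖²_HS · ∑_{l=1}^∞ l^{-2}. -/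

import Mathlib

noncomputable section
open scoped ENNReal RealInnerProductSpace
set_option linter.unusedSectionVars false

section AuxHS
variable {E F : Type*} [NormedAddCommGroup E] [InnerProductSpace ℝ E] [CompleteSpace E]
  [NormedAddCommGroup F] [InnerProductSpace ℝ F] [CompleteSpace F]

private lemma rpow_two' (x : ℝ) : x ^ ((2:ℝ≥0∞)).toReal = x ^ 2 := by
  rw [show ((2:ℝ≥0∞)).toReal = ((2:ℕ):ℝ) by norm_num, Real.rpow_natCast]

private lemma parseval_ofReal {κ : Type*} (C : HilbertBasis κ ℝ F) (y : F) :
    ∑' j, ENNReal.ofReal (⟪C j, y⟫ ^ 2) = ENNReal.ofReal (‖y‖ ^ 2) := by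
  have h : HasSum (fun j => ⟪C j, y⟫ ^ 2) (‖y‖ ^ 2) := by
    have h2 := C.hasSum_inner_mul_inner y y
    rw [real_inner_self_eq_norm_sq] at h2
    convert h2 using 2 with j
    · rfl
    rw [sq, real_inner_comm]
  rw [← h.tsum_eq, ← ENNReal.ofReal_tsum_of_nonneg (fun j => sq_nonneg _) h.summable]

private lemma hs_indep {ι κ : Type*} (A : E →L[ℝ] F) (B : HilbertBasis ι ℝ E)
    (C : HilbertBasis κ ℝ F) :
    ∑' i, ENNReal.ofReal (‖A (B i)‖ ^ 2)
      = ∑' j, ENNReal.ofReal (‖(ContinuousLinearMap.adjoint A) (C j)‖ ^ 2) := by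
  calc ∑' i, ENNReal.ofReal (‖A (B i)‖ ^ 2)
      = ∑' i, ∑' j, ENNReal.ofReal (⟪C j, A (B i)⟫ ^ 2) := by
        simp_rw [parseval_ofReal C]
    _ = ∑' j, ∑' i, ENNReal.ofReal (⟪C j, A (B i)⟫ ^ 2) := ENNReal.tsum_comm
    _ = ∑' j, ENNReal.ofReal (‖(ContinuousLinearMap.adjoint A) (C j)‖ ^ 2) := by
        refine tsum_congr fun j => ?_
        have key : ∀ i, ⟪C j, A (B i)⟫ = ⟪B i, (ContinuousLinearMap.adjoint A) (C j)⟫ := by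
          intro i
          rw [← ContinuousLinearMap.adjoint_inner_left, real_inner_comm]
        simp_rw [key]
        exact parseval_ofReal B _

private lemma phi_mem (T : E →L[ℝ] F) (g : lp (fun _ : ℕ => E) 2) :
    Memℓp (fun k : ℕ => (((k : ℝ) + 1)⁻¹) • T ((g : ∀ _ : ℕ, E) k)) 2 := by
  apply memℓp_gen
  have hg : Summable fun k : ℕ => ‖(g : ∀ _ : ℕ, E) k‖ ^ ((2:ℝ≥0∞)).toReal :=
    (lp.hasSum_norm (by norm_num) g).summable
  have hg2 : Summable fun k : ℕ => ‖T‖ ^ 2 * ‖(g : ∀ _ : ℕ, E) k‖ ^ 2 := by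
    simpa [rpow_two'] using hg.mul_left (‖T‖ ^ 2)
  refine hg2.of_nonneg_of_le (fun k => ?_) (fun k => ?_)
  · exact Real.rpow_nonneg (norm_nonneg _) _
  · rw [rpow_two']
    have h1 : ‖(((k : ℝ) + 1)⁻¹) • T ((g : ∀ _ : ℕ, E) k)‖ ≤ ‖T‖ * ‖(g : ∀ _ : ℕ, E) k‖ := by
      rw [norm_smul]
      have hle : ‖((k : ℝ) + 1)⁻¹‖ ≤ 1 := by
        rw [Real.norm_eq_abs, abs_of_nonneg (by positivity)]
        rw [inv_le_one_iff₀]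
        right; linarith [Nat.cast_nonneg (α := ℝ) k]
      calc ‖((k : ℝ) + 1)⁻¹‖ * ‖T ((g : ∀ _ : ℕ, E) k)‖
          ≤ 1 * ‖T ((g : ∀ _ : ℕ, E) k)‖ :=
            mul_le_mul_of_nonneg_right hle (norm_nonneg _)
        _ = ‖T ((g : ∀ _ : ℕ, E) k)‖ := one_mul _
        _ ≤ ‖T‖ * ‖(g : ∀ _ : ℕ, E) k‖ := T.le_opNorm _
    calc ‖(((k : ℝ) + 1)⁻¹) • T ((g : ∀ _ : ℕ, E) k)‖ ^ 2
        ≤ (‖T‖ * ‖(g : ∀ _ : ℕ, E) k‖) ^ 2 := by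
          exact pow_le_pow_left₀ (norm_nonneg _) h1 2
      _ = ‖T‖ ^ 2 * ‖(g : ∀ _ : ℕ, E) k‖ ^ 2 := by ring

private def PhiLM (T : E →L[ℝ] F) : lp (fun _ : ℕ => E) 2 →ₗ[ℝ] lp (fun _ : ℕ => F) 2 where
  toFun g := ⟨fun k => (((k : ℝ) + 1)⁻¹) • T ((g : ∀ _ : ℕ, E) k), phi_mem T g⟩
  map_add' g h := by
    apply lp.ext
    funext k
    simp only [lp.coeFn_add, Pi.add_apply]
    show (((k : ℝ) + 1)⁻¹) • T (((g : ∀ _ : ℕ, E) + (h : ∀ _ : ℕ, E)) k) = _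
    simp [smul_add]
  map_smul' c g := by
    apply lp.ext
    funext k
    simp only [RingHom.id_apply, lp.coeFn_smul, Pi.smul_apply]
    show (((k : ℝ) + 1)⁻¹) • T ((c • (g : ∀ _ : ℕ, E)) k) = _
    rw [Pi.smul_apply, map_smul, smul_comm]

private lemma PhiLM_norm_le (T : E →L[ℝ] F) (g : lp (fun _ : ℕ => E) 2) :
    ‖PhiLM T g‖ ≤ ‖T‖ * ‖g‖ := by
  have hf := lp.hasSum_norm (p := 2) (by norm_num) (PhiLM T g)
  have hg := lp.hasSum_norm (p := 2) (by norm_num) g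
  have hb : ‖PhiLM T g‖ ^ ((2:ℝ≥0∞)).toReal ≤ ‖T‖ ^ 2 * (‖g‖ ^ ((2:ℝ≥0∞)).toReal) := by
    refine hasSum_le (fun k => ?_) hf (hg.mul_left (‖T‖ ^ 2))
    rw [rpow_two', rpow_two']
    show ‖(((k : ℝ) + 1)⁻¹) • T ((g : ∀ _ : ℕ, E) k)‖ ^ 2 ≤ _
    have h1 : ‖(((k : ℝ) + 1)⁻¹) • T ((g : ∀ _ : ℕ, E) k)‖ ≤ ‖T‖ * ‖(g : ∀ _ : ℕ, E) k‖ := by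
      rw [norm_smul]
      have hle : ‖((k : ℝ) + 1)⁻¹‖ ≤ 1 := by
        rw [Real.norm_eq_abs, abs_of_nonneg (by positivity), inv_le_one_iff₀]
        right; linarith [Nat.cast_nonneg (α := ℝ) k]
      calc ‖((k : ℝ) + 1)⁻¹‖ * ‖T ((g : ∀ _ : ℕ, E) k)‖
          ≤ 1 * ‖T ((g : ∀ _ : ℕ, E) k)‖ := mul_le_mul_of_nonneg_right hle (norm_nonneg _)
        _ = ‖T ((g : ∀ _ : ℕ, E) k)‖ := one_mul _
        _ ≤ ‖T‖ * ‖(g : ∀ _ : ℕ, E) k‖ := T.le_opNorm _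
    calc ‖(((k : ℝ) + 1)⁻¹) • T ((g : ∀ _ : ℕ, E) k)‖ ^ 2
        ≤ (‖T‖ * ‖(g : ∀ _ : ℕ, E) k‖) ^ 2 := pow_le_pow_left₀ (norm_nonneg _) h1 2
      _ = ‖T‖ ^ 2 * ‖(g : ∀ _ : ℕ, E) k‖ ^ 2 := by ring
  rw [rpow_two', rpow_two'] at hb
  have h2 : ‖PhiLM T g‖ ^ 2 ≤ (‖T‖ * ‖g‖) ^ 2 := by
    calc ‖PhiLM T g‖ ^ 2 ≤ ‖T‖ ^ 2 * ‖g‖ ^ 2 := hb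
      _ = (‖T‖ * ‖g‖) ^ 2 := by ring
  exact (pow_le_pow_iff_left₀ (norm_nonneg _) (by positivity) two_ne_zero).1 h2

private def Phi (T : E →L[ℝ] F) : lp (fun _ : ℕ => E) 2 →L[ℝ] lp (fun _ : ℕ => F) 2 :=
  LinearMap.mkContinuous (PhiLM T) ‖T‖ (PhiLM_norm_le T)

private lemma Phi_apply (T : E →L[ℝ] F) (g : lp (fun _ : ℕ => E) 2) (k : ℕ) :
    (Phi T g : ∀ _ : ℕ, F) k = (((k : ℝ) + 1)⁻¹) • T ((g : ∀ _ : ℕ, E) k) := rfl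

private lemma Phi_single (T : E →L[ℝ] F) (k : ℕ) (x : E) :
    Phi T (lp.single 2 k x) = lp.single 2 k ((((k : ℝ) + 1)⁻¹) • T x) := by
  apply lp.ext
  funext j
  rw [Phi_apply]
  by_cases h : j = k
  · subst h
    rw [lp.single_apply_self, lp.single_apply_self]
  · rw [lp.single_apply_ne _ _ _ h, lp.single_apply_ne _ _ _ h, map_zero, smul_zero]

private def vfam (e : HilbertBasis ℕ ℝ E) : ℕ × ℕ → lp (fun _ : ℕ => E) 2 :=
  fun p => lp.single 2 p.1 (e p.2)

private lemma vfam_orthonormal (e : HilbertBasis ℕ ℝ E) : Orthonormal ℝ (vfam e) := by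
  rw [orthonormal_iff_ite]
  rintro ⟨k, i⟩ ⟨k', i'⟩
  simp only [vfam]
  rw [lp.inner_single_left]
  by_cases h : k = k'
  · subst h
    rw [lp.single_apply_self]
    have ho := e.orthonormal
    rw [orthonormal_iff_ite] at ho
    simpa [Prod.ext_iff] using ho i i'
  · rw [lp.single_apply_ne _ _ _ h, inner_zero_right]
    simp [Prod.ext_iff, h]

private lemma vfam_span (e : HilbertBasis ℕ ℝ E) :
    (Submodule.span ℝ (Set.range (vfam e)))ᗮ = ⊥ := by
  rw [Submodule.eq_bot_iff]
  intro f hf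
  apply lp.ext
  rw [lp.coeFn_zero]
  funext k
  show (f : ∀ _ : ℕ, E) k = 0
  have h0 : ∀ i : ℕ, ⟪e i, (f : ∀ _ : ℕ, E) k⟫ = 0 := by
    intro i
    have hmem : vfam e (k, i) ∈ Submodule.span ℝ (Set.range (vfam e)) :=
      Submodule.subset_span (Set.mem_range_self _)
    have := Submodule.inner_right_of_mem_orthogonal hmem hf
    rwa [show vfam e (k, i) = lp.single 2 k (e i) from rfl, lp.inner_single_left] at this
  rw [← e.repr.map_eq_zero_iff]
  apply lp.ext
  rw [lp.coeFn_zero]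
  funext i
  show e.repr ((f : ∀ _ : ℕ, E) k) i = 0
  rw [e.repr_apply_apply]
  exact h0 i

private lemma weight_summable : Summable (fun l : ℕ => (((l : ℝ) + 1) ^ 2)⁻¹) := by
  have h := (summable_nat_add_iff 1).2 (Real.summable_one_div_nat_pow.mpr one_lt_two)
  refine h.congr fun n => ?_
  push_cast
  rw [one_div]

private lemma concrete_hasSum (T : E →L[ℝ] F) (e : HilbertBasis ℕ ℝ E) (S : ℝ)
    (hT : HasSum (fun i : ℕ => ‖T (e i)‖ ^ 2) S) :
    HasSum (fun p : ℕ × ℕ => ‖Phi T (vfam e p)‖ ^ 2)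
      (S * ∑' l : ℕ, (((l : ℝ) + 1) ^ 2)⁻¹) := by
  have hw := weight_summable
  have hws : HasSum (fun l : ℕ => (((l : ℝ) + 1) ^ 2)⁻¹) (∑' l : ℕ, (((l : ℝ) + 1) ^ 2)⁻¹) :=
    hw.hasSum
  have hnorm : ∀ p : ℕ × ℕ,
      ‖Phi T (vfam e p)‖ ^ 2 = (((p.1 : ℝ) + 1) ^ 2)⁻¹ * ‖T (e p.2)‖ ^ 2 := by
    rintro ⟨k, i⟩
    rw [show vfam e (k, i) = lp.single 2 k (e i) from rfl, Phi_single]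
    rw [show lp.single (E := fun _ : ℕ => F) 2 k ((((k : ℝ) + 1)⁻¹) • T (e i))
        = lp.single 2 k ((fun _ : ℕ => (((k : ℝ) + 1)⁻¹) • T (e i)) k) from rfl]
    rw [lp.norm_single (E := fun _ : ℕ => F) (p := 2) (by norm_num) k ((fun _ : ℕ => (((k : ℝ) + 1)⁻¹) • T (e i)) k)]
    rw [norm_smul, Real.norm_eq_abs, abs_of_nonneg (by positivity), mul_pow, inv_pow]
  have hmul : Summable fun p : ℕ × ℕ => (((p.1 : ℝ) + 1) ^ 2)⁻¹ * ‖T (e p.2)‖ ^ 2 :=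
    hw.mul_of_nonneg hT.summable (fun l => by positivity) (fun i => sq_nonneg _)
  have hprod := hws.mul hT hmul
  rw [mul_comm] at hprod
  rw [show (fun p : ℕ × ℕ => ‖Phi T (vfam e p)‖ ^ 2)
      = fun p : ℕ × ℕ => (((p.1 : ℝ) + 1) ^ 2)⁻¹ * ‖T (e p.2)‖ ^ 2 from funext hnorm]
  exact hprod

end AuxHS

/-- key quantitative content of Theorem `seqgelfand`: if the inclusion
`T : N_{p+1} → N_p` of the Gel'fand-triple chain is Hilbert–Schmidt (with
∑_i ‖T e_i‖² = S for an orthonormal basis (e_i) of N_{p+1}), then the induced inclusion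
ℓ²_{p+1}(N_{p+1}) ↪ ℓ²_p(N_p) — which, under the canonical weight isometries
ℓ²_q(K) ≅ ℓ²(K), f ↦ (l^q f_l), corresponds to the operator g ↦ (l ↦ l⁻¹ • T (g_l)) on
plain ℓ² sequence spaces (positions l = 1, 2, … encoded by k+1 for k : ℕ) — is a bounded
operator which is again Hilbert–Schmidt, with Hilbert–Schmidt norm squared equal to
S · ∑_l l⁻², for every orthonormal (Hilbert) basis of the domain. -/
theorem weighted_inclusion_hilbertSchmidt
    (E F : Type*) [NormedAddCommGroup E] [InnerProductSpace ℝ E] [CompleteSpace E]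
    [NormedAddCommGroup F] [InnerProductSpace ℝ F] [CompleteSpace F]
    (T : E →L[ℝ] F) (e : HilbertBasis ℕ ℝ E) (S : ℝ)
    (hT : HasSum (fun i : ℕ => ‖T (e i)‖ ^ 2) S) :
    ∃ Φ : lp (fun _ : ℕ => E) 2 →L[ℝ] lp (fun _ : ℕ => F) 2,
      (∀ (g : lp (fun _ : ℕ => E) 2) (k : ℕ),
        (Φ g : ∀ _ : ℕ, F) k = (((k : ℝ) + 1)⁻¹) • T ((g : ∀ _ : ℕ, E) k)) ∧
      ∀ B : HilbertBasis (ℕ × ℕ) ℝ (lp (fun _ : ℕ => E) 2),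
        HasSum (fun p : ℕ × ℕ => ‖Φ (B p)‖ ^ 2)
          (S * ∑' l : ℕ, (((l : ℝ) + 1) ^ 2)⁻¹) := by
  refine ⟨Phi T, Phi_apply T, ?_⟩
  intro B
  set val := S * ∑' l : ℕ, (((l : ℝ) + 1) ^ 2)⁻¹ with hval_def
  have hcon := concrete_hasSum T e S hT
  let V : HilbertBasis (ℕ × ℕ) ℝ (lp (fun _ : ℕ => E) 2) :=
    HilbertBasis.mkOfOrthogonalEqBot (vfam_orthonormal e) (vfam_span e)
  have hVcoe : ⇑V = vfam e := HilbertBasis.coe_mkOfOrthogonalEqBot _ _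
  obtain ⟨w, C, -⟩ := exists_hilbertBasis ℝ (lp (fun _ : ℕ => F) 2)
  have h1 : ∑' p : ℕ × ℕ, ENNReal.ofReal (‖Phi T (B p)‖ ^ 2)
      = ∑' p : ℕ × ℕ, ENNReal.ofReal (‖Phi T (V p)‖ ^ 2) := by
    rw [hs_indep (Phi T) B C, hs_indep (Phi T) V C]
  have h2' : HasSum (fun p : ℕ × ℕ => ‖Phi T (V p)‖ ^ 2) val := by
    rw [hval_def, show (fun p : ℕ × ℕ => ‖Phi T (V p)‖ ^ 2)
        = fun p : ℕ × ℕ => ‖Phi T (vfam e p)‖ ^ 2 from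
      funext fun p => congrArg (fun z => ‖Phi T z‖ ^ 2) (congrFun hVcoe p)]
    exact hcon
  have h2 : ∑' p : ℕ × ℕ, ENNReal.ofReal (‖Phi T (V p)‖ ^ 2) = ENNReal.ofReal val := by
    rw [← h2'.tsum_eq, ← ENNReal.ofReal_tsum_of_nonneg (fun p => sq_nonneg _) h2'.summable]
  have hne : ∑' p : ℕ × ℕ, ENNReal.ofReal (‖Phi T (B p)‖ ^ 2) ≠ ⊤ := by
    rw [h1, h2]; exact ENNReal.ofReal_ne_top
  have hsum : Summable fun p : ℕ × ℕ => ‖Phi T (B p)‖ ^ 2 := by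
    have := ENNReal.summable_toReal hne
    refine this.congr fun p => ?_
    rw [ENNReal.toReal_ofReal (sq_nonneg _)]
  have hSnn : 0 ≤ S := hT.nonneg fun i => sq_nonneg _
  have hvnn : 0 ≤ val := mul_nonneg hSnn (tsum_nonneg fun l => by positivity)
  have hval : ∑' p : ℕ × ℕ, ‖Phi T (B p)‖ ^ 2 = val := by
    refine (ENNReal.ofReal_eq_ofReal_iff (tsum_nonneg fun p => sq_nonneg _) hvnn).1 ?_
    rw [ENNReal.ofReal_tsum_of_nonneg (fun p => sq_nonneg _) hsum, h1, h2]
  exact hval ▸ hsum.hasSum
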